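/- Let G be a group. For all k, l ≥ 1, the commutator subgroup [A_G(k), A_G(l)] is contained in A_G(k+l); in particular the Andreadakis–Johnson filtration is an N-series of IA(G), so Γ_{IA(G)}(k) ⊆ A_G(k) for every k ≥ 1. -/

import Mathlib

/-!
STATEMENT 1: Let G be a group. For all k, l ≥ 1, the commutator subgroup
[A_G(k), A_G(l)] is contained in A_G(k+l); in particular the Andreadakis–Johnson
filtration is an N-series of IA(G), so Γ_{IA(G)}(k) ⊆ A_G(k) for every k ≥ 1.

Here `Γ_G(m) = (⊤ : Subgroup G).lowerCentralSeries (m-1)`, `A_G(k) = johnsonFiltration G k` is the kernel of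
`Aut G → Aut (G/Γ_G(k+1))`, and `IA(G) = A_G(1)`.  The lower central series of `IA(G)`,
viewed inside `MulAut G`, is `Subgroup.map (johnsonFiltration G 1).subtype
((⊤ : Subgroup ↥(johnsonFiltration G 1)).lowerCentralSeries (k-1))`.
-/

/-- For a subgroup `N` of `G`, the subgroup of automorphisms `σ` with `x⁻¹ · x^σ ∈ N`
for all `x`. -/
def fixFiltration {G : Type*} [Group G] (N : Subgroup G) : Subgroup (MulAut G) where
  carrier := {σ | ∀ x : G, x⁻¹ * σ x ∈ N}
  one_mem' := by intro x; simpa using N.one_mem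
  mul_mem' := by
    intro σ τ hσ hτ x
    have h3 : σ (x⁻¹ * τ x) ∈ N := by
      have h4 : σ (x⁻¹ * τ x) =
          (x⁻¹ * τ x) * ((x⁻¹ * τ x)⁻¹ * σ (x⁻¹ * τ x)) := by group
      rw [h4]
      exact N.mul_mem (hτ x) (hσ _)
    have h5 : x⁻¹ * (σ * τ) x = (x⁻¹ * σ x) * σ (x⁻¹ * τ x) := by
      rw [MulAut.mul_apply, map_mul, map_inv]; group
    rw [h5]
    exact N.mul_mem (hσ x) h3
  inv_mem' := by
    intro σ hσ x
    have h := hσ (σ⁻¹ x)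
    rw [MulAut.apply_inv_self] at h
    simpa [mul_inv_rev] using N.inv_mem h

/-- The Andreadakis–Johnson filtration: `johnsonFiltration G k = 𝒜_G(k)`, the kernel of
`Aut G → Aut (G/Γ_G(k+1))`, where `Γ_G(k+1) = (⊤ : Subgroup G).lowerCentralSeries k`. -/
def johnsonFiltration (G : Type*) [Group G] (k : ℕ) : Subgroup (MulAut G) :=
  fixFiltration ((⊤ : Subgroup G).lowerCentralSeries k)

theorem mem_johnsonFiltration {G : Type*} [Group G] {k : ℕ} {σ : MulAut G} :
    σ ∈ johnsonFiltration G k ↔ ∀ x : G, x⁻¹ * σ x ∈ (⊤ : Subgroup G).lowerCentralSeries k :=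
  Iff.rfl



open scoped commutatorElement

section Aux

variable {G : Type*} [Group G]

lemma lcs_succ {H : Type*} [Group H] (n : ℕ) :
    (⊤ : Subgroup H).lowerCentralSeries (n + 1) = ⁅(⊤ : Subgroup H).lowerCentralSeries n, ⊤⁆ := rfl

/-- Three subgroups lemma, relative version. -/
lemma three_subgroups_le {H K L N : Subgroup G} [N.Normal]
    (h1 : ⁅⁅K, L⁆, H⁆ ≤ N) (h2 : ⁅⁅L, H⁆, K⁆ ≤ N) : ⁅⁅H, K⁆, L⁆ ≤ N := by
  have key : ∀ {A B C : Subgroup G}, ⁅⁅A, B⁆, C⁆ ≤ N ↔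
      ⁅⁅A.map (QuotientGroup.mk' N), B.map (QuotientGroup.mk' N)⁆,
        C.map (QuotientGroup.mk' N)⁆ = ⊥ := by
    intro A B C
    rw [← Subgroup.map_commutator, ← Subgroup.map_commutator, Subgroup.map_eq_bot_iff,
      QuotientGroup.ker_mk']
  rw [key]
  exact Subgroup.commutator_commutator_eq_bot_of_rotate (key.mp h1) (key.mp h2)

/-- `⁅Γ_{n+1}, Γ_{m+1}⁆ ≤ Γ_{n+m+2}` for the lower central series. -/
lemma lcs_commutator_le (m : ℕ) :
    ∀ n : ℕ, ⁅(⊤ : Subgroup G).lowerCentralSeries n, (⊤ : Subgroup G).lowerCentralSeries m⁆ ≤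
      (⊤ : Subgroup G).lowerCentralSeries (n + m + 1) := by
  induction m with
  | zero =>
      intro n
      rw [Subgroup.lowerCentralSeries_zero, ← lcs_succ]
  | succ m ih =>
      intro n
      rw [lcs_succ m, Subgroup.commutator_comm]
      refine three_subgroups_le ?_ ?_
      · calc ⁅⁅(⊤ : Subgroup G), (⊤ : Subgroup G).lowerCentralSeries n⁆, (⊤ : Subgroup G).lowerCentralSeries m⁆
            = ⁅(⊤ : Subgroup G).lowerCentralSeries (n + 1), (⊤ : Subgroup G).lowerCentralSeries m⁆ := by
              rw [Subgroup.commutator_comm (⊤ : Subgroup G) ((⊤ : Subgroup G).lowerCentralSeries n), ← lcs_succ]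
          _ ≤ (⊤ : Subgroup G).lowerCentralSeries (n + 1 + m + 1) := ih (n + 1)
          _ = (⊤ : Subgroup G).lowerCentralSeries (n + (m + 1) + 1) := by ring_nf
      · calc ⁅⁅(⊤ : Subgroup G).lowerCentralSeries n, (⊤ : Subgroup G).lowerCentralSeries m⁆, (⊤ : Subgroup G)⁆
            ≤ ⁅(⊤ : Subgroup G).lowerCentralSeries (n + m + 1), (⊤ : Subgroup G)⁆ :=
              Subgroup.commutator_mono (ih n) le_rfl
          _ = (⊤ : Subgroup G).lowerCentralSeries (n + m + 1 + 1) := (lcs_succ _).symm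
          _ = (⊤ : Subgroup G).lowerCentralSeries (n + (m + 1) + 1) := by ring_nf

/-- A purely computational commutator identity. -/
lemma comm_aux {H : Type*} [Group H] (Y X A B : H)
    (hA : ∀ z : H, A * z = z * A) (hYB : B * Y = Y * B) :
    ⁅Y * A, X * B⁆ = ⁅Y, X⁆ := by
  have hB : B * Y⁻¹ = Y⁻¹ * B :=
    calc B * Y⁻¹ = Y⁻¹ * (Y * B) * Y⁻¹ := by group
      _ = Y⁻¹ * (B * Y) * Y⁻¹ := by rw [hYB]
      _ = Y⁻¹ * B := by group
  have h1 : A * (X * B) * A⁻¹ = X * B := by rw [hA (X * B)]; group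
  calc ⁅Y * A, X * B⁆ = Y * (A * (X * B) * A⁻¹) * Y⁻¹ * (X * B)⁻¹ := by group
    _ = Y * (X * B) * Y⁻¹ * (X * B)⁻¹ := by rw [h1]
    _ = Y * X * (B * Y⁻¹) * (B⁻¹ * X⁻¹) := by group
    _ = Y * X * (Y⁻¹ * B) * (B⁻¹ * X⁻¹) := by rw [hB]
    _ = ⁅Y, X⁆ := by group

/-- Key lemma: an automorphism in `A_G(k)` moves elements of `Γ_{n+1}` by `Γ_{n+k+1}`. -/
lemma johnson_shift {k : ℕ} {σ : MulAut G} (hσ : σ ∈ johnsonFiltration G k) :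
    ∀ n : ℕ, ∀ y ∈ (⊤ : Subgroup G).lowerCentralSeries n, y⁻¹ * σ y ∈ (⊤ : Subgroup G).lowerCentralSeries (n + k) := by
  intro n
  induction n with
  | zero => intro y _; simpa using hσ y
  | succ n ih =>
      set N := (⊤ : Subgroup G).lowerCentralSeries (n + 1 + k) with hNdef
      have hNN : N.Normal := by rw [hNdef]; infer_instance
      let T : Subgroup G :=
      { carrier := {y : G | y⁻¹ * σ y ∈ N}
        one_mem' := by simpa using N.one_mem
        mul_mem' := by
          intro x y hx hy
          have key : (x * y)⁻¹ * σ (x * y) = y⁻¹ * (x⁻¹ * σ x) * y * (y⁻¹ * σ y) := by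
            rw [map_mul]; group
          show (x * y)⁻¹ * σ (x * y) ∈ N
          rw [key]
          exact N.mul_mem (by simpa using hNN.conj_mem _ hx y⁻¹) hy
        inv_mem' := by
          intro x hx
          have key : (x⁻¹)⁻¹ * σ x⁻¹ = x * (x⁻¹ * σ x)⁻¹ * x⁻¹ := by
            rw [map_inv]; group
          show (x⁻¹)⁻¹ * σ x⁻¹ ∈ N
          rw [key]
          exact hNN.conj_mem _ (N.inv_mem hx) x }
      have hle : (⊤ : Subgroup G).lowerCentralSeries (n + 1) ≤ T := by
        rw [lcs_succ, Subgroup.commutator_le]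
        intro y hy x _
        show ⁅y, x⁆⁻¹ * σ ⁅y, x⁆ ∈ N
        set π := QuotientGroup.mk' N with hπ
        have hker : ∀ g : G, g ∈ N ↔ π g = 1 := fun g => (QuotientGroup.eq_one_iff g).symm
        rw [hker]
        set a := y⁻¹ * σ y with hadef
        set b := x⁻¹ * σ x with hbdef
        have ha : a ∈ (⊤ : Subgroup G).lowerCentralSeries (n + k) := ih y hy
        have hb : b ∈ (⊤ : Subgroup G).lowerCentralSeries k := hσ x
        have hsy : σ y = y * a := by rw [hadef]; group
        have hsx : σ x = x * b := by rw [hbdef]; group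
        clear_value a b
        have hAcentral : ∀ z : G ⧸ N, π a * z = z * π a := by
          intro z
          obtain ⟨g, rfl⟩ := QuotientGroup.mk'_surjective N z
          have hmem : ⁅a, g⁆ ∈ N := by
            have h0 : ⁅a, g⁆ ∈ ⁅(⊤ : Subgroup G).lowerCentralSeries (n + k), (⊤ : Subgroup G)⁆ :=
              Subgroup.commutator_mem_commutator ha (Subgroup.mem_top g)
            rw [← lcs_succ] at h0
            have heq : n + k + 1 = n + 1 + k := by ring
            rwa [heq] at h0
          have h1 : π ⁅a, g⁆ = 1 := (hker _).mp hmem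
          rw [map_commutatorElement] at h1
          exact commutatorElement_eq_one_iff_mul_comm.mp h1
        have hYB : π b * π y = π y * π b := by
          have hmem : ⁅b, y⁆ ∈ N := by
            have h0 : ⁅b, y⁆ ∈ ⁅(⊤ : Subgroup G).lowerCentralSeries k, (⊤ : Subgroup G).lowerCentralSeries n⁆ :=
              Subgroup.commutator_mem_commutator hb hy
            have h2 : ⁅(⊤ : Subgroup G).lowerCentralSeries k, (⊤ : Subgroup G).lowerCentralSeries n⁆ ≤ N := by
              have h3 := lcs_commutator_le (G := G) n k
              have heq : k + n + 1 = n + 1 + k := by ring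
              rwa [heq] at h3
            exact h2 h0
          have h1 : π ⁅b, y⁆ = 1 := (hker _).mp hmem
          rw [map_commutatorElement] at h1
          exact commutatorElement_eq_one_iff_mul_comm.mp h1
        have hcomm : σ ⁅y, x⁆ = ⁅y * a, x * b⁆ := by
          rw [map_commutatorElement, hsy, hsx]
        rw [hcomm, map_mul, map_inv, map_commutatorElement, map_commutatorElement,
          map_mul, map_mul, comm_aux (π y) (π x) (π a) (π b) hAcentral hYB, inv_mul_cancel]
      intro y hy
      exact hle hy

/-- Main inclusion: `[A_G(k), A_G(l)] ≤ A_G(k+l)`, for all `k l : ℕ`. -/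
lemma johnson_commutator_le (k l : ℕ) :
    ⁅johnsonFiltration G k, johnsonFiltration G l⁆ ≤ johnsonFiltration G (k + l) := by
  rw [Subgroup.commutator_le]
  intro σ hσ τ hτ
  rw [mem_johnsonFiltration]
  intro x
  set y := σ⁻¹ (τ⁻¹ x) with hy
  have hx : x = τ (σ y) := by rw [hy]; simp
  set a := y⁻¹ * σ y with hadef
  set b := y⁻¹ * τ y with hbdef
  have ha : a ∈ (⊤ : Subgroup G).lowerCentralSeries k := hσ y
  have hb : b ∈ (⊤ : Subgroup G).lowerCentralSeries l := hτ y
  have hc : a⁻¹ * τ a ∈ (⊤ : Subgroup G).lowerCentralSeries (k + l) := johnson_shift hτ k a ha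
  have hd : b⁻¹ * σ b ∈ (⊤ : Subgroup G).lowerCentralSeries (k + l) := by
    have := johnson_shift hσ l b hb
    rwa [add_comm] at this
  have hab : ⁅a⁻¹, b⁻¹⁆ ∈ (⊤ : Subgroup G).lowerCentralSeries (k + l) := by
    have h1 : ⁅a⁻¹, b⁻¹⁆ ∈ ⁅(⊤ : Subgroup G).lowerCentralSeries k, (⊤ : Subgroup G).lowerCentralSeries l⁆ :=
      Subgroup.commutator_mem_commutator (((⊤ : Subgroup G).lowerCentralSeries k).inv_mem ha)
        (((⊤ : Subgroup G).lowerCentralSeries l).inv_mem hb)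
    have h2 : ⁅(⊤ : Subgroup G).lowerCentralSeries k, (⊤ : Subgroup G).lowerCentralSeries l⁆ ≤
        (⊤ : Subgroup G).lowerCentralSeries (k + l) :=
      (lcs_commutator_le l k).trans (Subgroup.lowerCentralSeries_antitone _ (by omega))
    exact h2 h1
  have hsy : σ y = y * a := by rw [hadef]; group
  have hty : τ y = y * b := by rw [hbdef]; group
  clear_value a b
  have e1 : ⁅σ, τ⁆ x = σ (τ y) := by
    rw [hy]; simp [commutatorElement_def]
  have key : x⁻¹ * ⁅σ, τ⁆ x = (a⁻¹ * τ a)⁻¹ * (⁅a⁻¹, b⁻¹⁆ * (b⁻¹ * σ b)) := by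
    rw [e1, hx, hty, map_mul, hsy, map_mul, hty]
    group
  rw [key]
  exact ((⊤ : Subgroup G).lowerCentralSeries (k + l)).mul_mem
    (((⊤ : Subgroup G).lowerCentralSeries (k + l)).inv_mem hc)
    (((⊤ : Subgroup G).lowerCentralSeries (k + l)).mul_mem hab hd)

end Aux

theorem statement1 (G : Type*) [Group G] :
    (∀ k l : ℕ, 1 ≤ k → 1 ≤ l →
      ⁅johnsonFiltration G k, johnsonFiltration G l⁆ ≤ johnsonFiltration G (k + l)) ∧
    (∀ k : ℕ, 1 ≤ k →
      Subgroup.map (johnsonFiltration G 1).subtype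
          ((⊤ : Subgroup ↥(johnsonFiltration G 1)).lowerCentralSeries (k - 1)) ≤
        johnsonFiltration G k) := by
  constructor
  · intro k l _ _
    exact johnson_commutator_le k l
  · intro k hk
    suffices h : ∀ m : ℕ, Subgroup.map (johnsonFiltration G 1).subtype
        ((⊤ : Subgroup ↥(johnsonFiltration G 1)).lowerCentralSeries m) ≤ johnsonFiltration G (m + 1) by
      have := h (k - 1)
      rwa [Nat.sub_add_cancel hk] at this
    intro m
    induction m with
    | zero =>
        rw [Subgroup.lowerCentralSeries_zero, ← MonoidHom.range_eq_map, Subgroup.range_subtype]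
    | succ m ih =>
        rw [lcs_succ, Subgroup.map_commutator]
        calc ⁅Subgroup.map (johnsonFiltration G 1).subtype
              ((⊤ : Subgroup ↥(johnsonFiltration G 1)).lowerCentralSeries m),
              Subgroup.map (johnsonFiltration G 1).subtype ⊤⁆
            ≤ ⁅johnsonFiltration G (m + 1), johnsonFiltration G 1⁆ := by
              refine Subgroup.commutator_mono ih ?_
              rw [← MonoidHom.range_eq_map, Subgroup.range_subtype]
          _ ≤ johnsonFiltration G (m + 1 + 1) := johnson_commutator_le (m + 1) 1
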